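/- Let D be a symmetric hollow n×n matrix and let D_cmds = EDM(X^T X) where X solves the classical MDS problem in dimension r (keeping the r largest positive eigenvalues of -(1/2)VDV). With λ̄ defined by zeroing the eigenvalues of D̂ kept by cMDS, C_1 = Σλ̄_i^2, C_2 = -Σλ̄_i, and S the orthogonal matrix Q·blockdiag(U,1) where U diagonalizes D̂, one has ||D - D_cmds||_F^2 = C_1 + C_2^2 + (n||(S∘S)λ̄||^2 - C_2^2)/2. -/

import Mathlib

open Matrix

lemma mul_vecMulVec_mul {N : ℕ} (A B : Matrix (Fin N) (Fin N) ℝ) (x y : Fin N → ℝ) :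
    A * vecMulVec x y * B = vecMulVec (A *ᵥ x) (y ᵥ* B) := by
  ext i j
  rw [mul_apply, vecMulVec_apply, mulVec, vecMul]
  simp only [mul_apply, vecMulVec_apply, dotProduct, Finset.sum_mul]
  simp only [Finset.mul_sum]
  rw [Finset.sum_comm]
  apply Finset.sum_congr rfl; intros; apply Finset.sum_congr rfl; intros; ring

lemma vmv_sq {N : ℕ} (v : Fin N → ℝ) :
    vecMulVec v v * vecMulVec v v = (v ⬝ᵥ v) • vecMulVec v v := by
  ext i j
  rw [mul_apply, Matrix.smul_apply, vecMulVec_apply, dotProduct, smul_eq_mul, Finset.sum_mul]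
  apply Finset.sum_congr rfl; intros
  rw [vecMulVec_apply, vecMulVec_apply]; ring

lemma sum_sq_expand {N : ℕ} (Z : Matrix (Fin N) (Fin N) ℝ)
    (hrow : ∀ i, ∑ j, Z i j = 0) (hcol : ∀ j, ∑ i, Z i j = 0) :
    ∑ i, ∑ j, (Z i i + Z j j - 2 * Z i j) ^ 2 =
      2 * N * (∑ i, (Z i i) ^ 2) + 4 * (∑ i, ∑ j, (Z i j) ^ 2) + 2 * (∑ i, Z i i) ^ 2 := by
  have h1 : ∀ i : Fin N, ∑ j, (Z i i + Z j j - 2 * Z i j) ^ 2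
      = N * (Z i i) ^ 2 + (∑ j, (Z j j) ^ 2) + 4 * (∑ j, (Z i j) ^ 2)
        + 2 * (Z i i * ∑ j, Z j j) - 4 * (∑ j, Z j j * Z i j) := by
    intro i
    have e1 : ∀ j, (Z i i + Z j j - 2 * Z i j) ^ 2
        = ((((Z i i) ^ 2 + (Z j j) ^ 2) + 4 * (Z i j) ^ 2) + (2 * (Z i i * Z j j)
          - 4 * (Z i i * Z i j))) - 4 * (Z j j * Z i j) := fun j => by ring
    rw [Finset.sum_congr rfl fun j _ => e1 j]
    simp only [Finset.sum_sub_distrib, Finset.sum_add_distrib]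
    rw [Finset.sum_const, Finset.card_univ, Fintype.card_fin, nsmul_eq_mul]
    simp only [← Finset.mul_sum]
    rw [hrow i]
    ring
  rw [Finset.sum_congr rfl fun i _ => h1 i]
  have h2 : ∑ i : Fin N, ∑ j, Z j j * Z i j = 0 := by
    rw [Finset.sum_comm]
    simp only [← Finset.mul_sum]
    exact Finset.sum_eq_zero fun j _ => by rw [hcol j, mul_zero]
  simp only [Finset.sum_sub_distrib, Finset.sum_add_distrib]
  rw [Finset.sum_const, Finset.card_univ, Fintype.card_fin, nsmul_eq_mul]
  simp only [← Finset.mul_sum]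
  rw [h2, ← Finset.sum_mul]
  ring

theorem cmds_sstress_decomposition (n r : ℕ) (D : Matrix (Fin (n + 1)) (Fin (n + 1)) ℝ)
    (hsymm : D.IsSymm) (hhollow : ∀ i, D i i = 0) :
    let v : Fin (n + 1) → ℝ := fun i => if i = Fin.last n then 1 + Real.sqrt (n + 1) else 1
    let Q : Matrix (Fin (n + 1)) (Fin (n + 1)) ℝ := 1 - (2 / (v ⬝ᵥ v)) • vecMulVec v v
    let Dhat : Matrix (Fin n) (Fin n) ℝ :=
      Matrix.of fun i j => (Q * D * Q) i.castSucc j.castSucc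
    ∀ (U : Matrix (Fin n) (Fin n) ℝ) (l : Fin n → ℝ),
      Uᵀ * U = 1 → (∀ i j : Fin n, i ≤ j → l i ≤ l j) →
      Dhat = U * Matrix.diagonal l * Uᵀ →
      let Ub : Matrix (Fin (n + 1)) (Fin (n + 1)) ℝ :=
        Matrix.of fun i j =>
          Fin.lastCases (Fin.lastCases (1 : ℝ) (fun _ => (0 : ℝ)) j)
            (fun i' => Fin.lastCases (0 : ℝ) (fun j' => U i' j') j) i
      let S : Matrix (Fin (n + 1)) (Fin (n + 1)) ℝ := Q * Ub
      let lamBar : Fin (n + 1) → ℝ := fun i =>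
        Fin.lastCases (0 : ℝ)
          (fun i' => if l i' > 0 ∨ r < (i' : ℕ) + 1 then l i' else 0) i
      let mu : Fin (n + 1) → ℝ := fun i =>
        Fin.lastCases (0 : ℝ)
          (fun i' => if l i' > 0 ∨ r < (i' : ℕ) + 1 then 0 else -(l i') / 2) i
      let Y : Matrix (Fin (n + 1)) (Fin (n + 1)) ℝ := S * Matrix.diagonal mu * Sᵀ
      let Dcmds : Matrix (Fin (n + 1)) (Fin (n + 1)) ℝ :=
        Matrix.of fun i j => Y i i + Y j j - 2 * Y i j
      let C1 : ℝ := ∑ i, (lamBar i) ^ 2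
      let C2 : ℝ := -∑ i, lamBar i
      ∑ i, ∑ j, (D i j - Dcmds i j) ^ 2 =
        C1 + C2 ^ 2 +
          (((n : ℝ) + 1) * (∑ i, ((S.hadamard S).mulVec lamBar i) ^ 2) - C2 ^ 2) / 2 := by
  intro v Q Dhat U l hU hmono hDhat Ub S lamBar mu Y Dcmds C1 C2
  set s : ℝ := Real.sqrt (n + 1) with hs
  have hnn : (0:ℝ) ≤ (n:ℝ) + 1 := by positivity
  have hss : s * s = (n:ℝ) + 1 := Real.mul_self_sqrt hnn
  have hspos : 0 < s := Real.sqrt_pos.mpr (by positivity)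
  have hvsum : ∑ i, v i = ((n:ℝ) + 1) + s := by
    simp only [v]
    rw [Fin.sum_univ_castSucc]
    simp only [if_neg (Fin.castSucc_lt_last _).ne, if_pos rfl]
    rw [Finset.sum_const, Finset.card_univ, Fintype.card_fin, nsmul_eq_mul]
    push_cast; ring
  have hvv : v ⬝ᵥ v = 2 * (((n:ℝ) + 1) + s) := by
    simp only [dotProduct, v]
    rw [Fin.sum_univ_castSucc]
    simp only [if_neg (Fin.castSucc_lt_last _).ne, if_pos rfl]
    rw [Finset.sum_const, Finset.card_univ, Fintype.card_fin, nsmul_eq_mul]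
    push_cast; nlinarith [hss]
  have hvvpos : 0 < v ⬝ᵥ v := by rw [hvv]; positivity
  have hQsymm : Qᵀ = Q := by
    simp only [Q]
    rw [transpose_sub, transpose_one, transpose_smul]
    congr 1; ext i j
    simp only [Matrix.smul_apply, transpose_apply, vecMulVec_apply, smul_eq_mul]
    ring
  have hQQ : Q * Q = 1 := by
    simp only [Q]
    have hsm : ((2 / (v ⬝ᵥ v)) • vecMulVec v v) * ((2 / (v ⬝ᵥ v)) • vecMulVec v v)
        = (2 / (v ⬝ᵥ v) * (2 / (v ⬝ᵥ v)) * (v ⬝ᵥ v)) • vecMulVec v v := by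
      rw [smul_mul_assoc, mul_smul_comm, vmv_sq, smul_smul, smul_smul]
    rw [sub_mul, mul_sub, mul_sub, one_mul, mul_one, hsm]
    have : 2 / (v ⬝ᵥ v) * (2 / (v ⬝ᵥ v)) * (v ⬝ᵥ v) = 2 / (v ⬝ᵥ v) + 2 / (v ⬝ᵥ v) := by
      field_simp; ring
    rw [this, add_smul]
    simp only [one_mul]
    abel
  have hQ1 : Q *ᵥ (fun _ => (1:ℝ)) = fun i => if i = Fin.last n then -s else 0 := by
    funext i
    have hAx : (vecMulVec v v *ᵥ fun _ => (1:ℝ)) i = v i * (((n:ℝ) + 1) + s) := by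
      simp only [mulVec, dotProduct, vecMulVec_apply, mul_one]
      rw [← Finset.mul_sum, hvsum]
    rw [sub_mulVec, one_mulVec, smul_mulVec]
    simp only [Pi.sub_apply, Pi.smul_apply, smul_eq_mul, hAx, hvv]
    have h2 : 2 / (2 * (((n:ℝ) + 1) + s)) * (v i * (((n:ℝ)+1) + s)) = v i := by
      have : ((n:ℝ) + 1) + s ≠ 0 := by positivity
      field_simp
    rw [h2]
    by_cases hi : i = Fin.last n
    · simp only [v, if_pos hi]; ring
    · simp only [v, if_neg hi]; ring
  have hQlast : ∀ i, Q i (Fin.last n) = -(1/s) := by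
    intro i
    simp only [Q, Matrix.sub_apply, Matrix.smul_apply, vecMulVec_apply, smul_eq_mul, hvv]
    have hvlast : v (Fin.last n) = 1 + s := by simp [v, hs]
    have hne : ((n:ℝ) + 1) + s ≠ 0 := by positivity
    by_cases hi : i = Fin.last n
    · rw [hi, one_apply_eq, hvlast]
      rw [show ((n:ℝ)+1) = s*s from hss.symm]
      field_simp
      ring
    · rw [one_apply_ne hi]
      have : v i = 1 := by simp [v, hi]
      rw [this, hvlast, show ((n:ℝ)+1) = s*s from hss.symm]
      field_simp
      ring
  -- Ub is orthogonal
  have hUbUb : Ubᵀ * Ub = 1 := by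
    ext k m
    rw [mul_apply]
    simp only [transpose_apply, Ub, of_apply]
    induction k using Fin.lastCases with
    | last =>
      induction m using Fin.lastCases with
      | last =>
        rw [Fin.sum_univ_castSucc]
        simp [one_apply]
      | cast m' =>
        rw [Fin.sum_univ_castSucc]
        simp [one_apply, (Fin.castSucc_lt_last m').ne']
    | cast k' =>
      induction m using Fin.lastCases with
      | last =>
        rw [Fin.sum_univ_castSucc]
        simp [one_apply, (Fin.castSucc_lt_last k').ne]
      | cast m' =>
        rw [Fin.sum_univ_castSucc]
        simp only [Fin.lastCases_castSucc, Fin.lastCases_last, mul_zero, add_zero, zero_mul]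
        have hUe := congrFun (congrFun hU k') m'
        rw [mul_apply] at hUe
        simp only [transpose_apply] at hUe
        rw [hUe]
        by_cases h : k' = m'
        · rw [h, one_apply_eq, one_apply_eq]
        · rw [one_apply_ne h, one_apply_ne (fun hc => h (Fin.castSucc_inj.mp hc))]
  -- the matrix M = Q D Q and its symmetry
  set M : Matrix (Fin (n+1)) (Fin (n+1)) ℝ := Q * D * Q with hMdef
  have hMsymmM : Mᵀ = M := by
    rw [hMdef, transpose_mul, transpose_mul, hsymm.eq, hQsymm, Matrix.mul_assoc]
  have hMsymm : ∀ i j, M i j = M j i := by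
    intro i j
    conv_lhs => rw [← hMsymmM]
    rfl
  have hDhatM : ∀ (i' j' : Fin n), Dhat i' j' = M i'.castSucc j'.castSucc := by
    intro i' j'; simp only [Dhat, of_apply, hMdef]
  -- auxiliary vectors
  set e : Fin (n+1) → ℝ := fun i => if i = Fin.last n then (1:ℝ) else 0 with he
  set w : Fin (n+1) → ℝ := fun i => M i (Fin.last n) with hw
  set nu : Fin (n+1) → ℝ := fun k => Fin.lastCases (0:ℝ) (fun k' => -(l k')/2) k with hnu
  -- kernel identity
  have hker : Ub * diagonal nu * Ubᵀ
      = (-(1/2) : ℝ) • (M - vecMulVec e w - vecMulVec w e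
          + (M (Fin.last n) (Fin.last n)) • vecMulVec e e) := by
    ext i j
    rw [mul_apply]
    simp only [mul_diagonal, transpose_apply, Ub, of_apply]
    simp only [Matrix.smul_apply, Matrix.sub_apply, Matrix.add_apply, vecMulVec_apply, smul_eq_mul]
    induction i using Fin.lastCases with
    | last =>
      induction j using Fin.lastCases with
      | last =>
        rw [Fin.sum_univ_castSucc]
        simp only [Fin.lastCases_castSucc, Fin.lastCases_last, hnu, he, hw]
        simp [(Fin.castSucc_lt_last _).ne]
      | cast j' =>
        rw [Fin.sum_univ_castSucc]
        simp only [Fin.lastCases_castSucc, Fin.lastCases_last, hnu, he, hw]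
        simp [(Fin.castSucc_lt_last _).ne, hMsymm (Fin.last n) j'.castSucc]
    | cast i' =>
      induction j using Fin.lastCases with
      | last =>
        rw [Fin.sum_univ_castSucc]
        simp only [Fin.lastCases_castSucc, Fin.lastCases_last, hnu, he, hw]
        simp [(Fin.castSucc_lt_last _).ne]
      | cast j' =>
        rw [Fin.sum_univ_castSucc]
        simp only [Fin.lastCases_castSucc, Fin.lastCases_last, hnu, he]
        simp only [if_neg (Fin.castSucc_lt_last _).ne, mul_zero, zero_mul, add_zero,
          mul_one, sub_zero, Fin.lastCases_last]
        have hD' : M i'.castSucc j'.castSucc = ∑ k', U i' k' * l k' * U j' k' := by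
          rw [← hDhatM, hDhat, mul_apply]
          apply Finset.sum_congr rfl; intro k' _
          rw [mul_diagonal, transpose_apply]
        rw [hD', Finset.mul_sum]
        apply Finset.sum_congr rfl; intro k' _
        ring
  -- the matrix B
  set B : Matrix (Fin (n+1)) (Fin (n+1)) ℝ := Q * (Ub * diagonal nu * Ubᵀ) * Q with hBdef
  set g : Fin (n+1) → ℝ := Q *ᵥ w with hg
  set qe : Fin (n+1) → ℝ := fun _ => -(1/s) with hqe
  have hQMQ : Q * M * Q = D := by
    rw [hMdef]
    have : Q * (Q * D * Q) * Q = (Q * Q) * D * (Q * Q) := by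
      simp only [Matrix.mul_assoc]
    rw [this, hQQ, Matrix.one_mul, Matrix.mul_one]
  have hQe : Q *ᵥ e = qe := by
    funext i
    simp only [mulVec, dotProduct, he, mul_ite, mul_one, mul_zero]
    rw [Finset.sum_ite_eq' Finset.univ (Fin.last n) (fun j => Q i j)]
    simp [hqe, hQlast i]
  have heQ : e ᵥ* Q = qe := by rw [← hQsymm, vecMul_transpose]; try exact hQe
  have hwQ : w ᵥ* Q = g := by rw [← hQsymm, vecMul_transpose]; try exact hg.symm
  have hB2 : B = (-(1/2) : ℝ) • (D - vecMulVec qe g - vecMulVec g qe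
      + (M (Fin.last n) (Fin.last n)) • vecMulVec qe qe) := by
    rw [hBdef, hker]
    rw [mul_smul_comm, smul_mul_assoc]
    congr 1
    simp only [Matrix.mul_sub, Matrix.sub_mul, Matrix.mul_add, Matrix.add_mul,
      mul_smul_comm, smul_mul_assoc]
    rw [hQMQ, mul_vecMulVec_mul, mul_vecMulVec_mul, mul_vecMulVec_mul, hQe, heQ, hwQ]
  have hBij : ∀ i j, B i j = -(1/2) * (D i j + (1/s) * g j + (1/s) * g i
      + M (Fin.last n) (Fin.last n) * ((1/s) * (1/s))) := by
    intro i j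
    rw [hB2]
    simp only [Matrix.smul_apply, Matrix.sub_apply, Matrix.add_apply, vecMulVec_apply, smul_eq_mul, hqe]
    ring
  have hDB : ∀ i j, D i j = B i i + B j j - 2 * B i j := by
    intro i j
    rw [hBij i i, hBij j j, hBij i j, hhollow i, hhollow j]
    ring
  -- the matrix Z
  set dz : Fin (n+1) → ℝ := fun k => -(lamBar k)/2 with hdz
  set Z : Matrix (Fin (n+1)) (Fin (n+1)) ℝ := S * diagonal dz * Sᵀ with hZdef
  have hnumudz : ∀ k, nu k - mu k = dz k := by
    intro k
    induction k using Fin.lastCases with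
    | last => simp [hnu, hdz, mu, lamBar]
    | cast k' =>
      simp only [hnu, hdz, mu, lamBar, Fin.lastCases_castSucc]
      by_cases h : l k' > 0 ∨ r < (k' : ℕ) + 1
      · simp only [if_pos h]; ring
      · simp only [if_neg h]; ring
  have hSB : S * diagonal nu * Sᵀ = B := by
    rw [hBdef]
    simp only [S, transpose_mul, hQsymm]
    simp only [Matrix.mul_assoc]
  have hZBY : Z = B - Y := by
    rw [hZdef, ← hSB]
    simp only [Y]
    rw [← Matrix.sub_mul, ← Matrix.mul_sub, diagonal_sub,
      show (fun k => nu k - mu k) = dz from funext hnumudz]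
  -- key pointwise identity
  have key : ∀ i j, D i j - Dcmds i j = Z i i + Z j j - 2 * Z i j := by
    intro i j
    have hDc : Dcmds i j = Y i i + Y j j - 2 * Y i j := by simp only [Dcmds, of_apply]
    rw [hDc, hDB i j]
    simp only [hZBY, Matrix.sub_apply]
    ring
  -- orthogonality of S
  have hSS : Sᵀ * S = 1 := by
    simp only [S, transpose_mul, hQsymm]
    rw [Matrix.mul_assoc Ubᵀ Q (Q * Ub), ← Matrix.mul_assoc Q Q Ub, hQQ, Matrix.one_mul, hUbUb]
  have hSS' : S * Sᵀ = 1 := mul_eq_one_comm.mp hSS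
  -- symmetry of Z
  have hzs : ∀ i j, Z i j = Z j i := by
    intro i j
    rw [hZdef, mul_apply, mul_apply]
    simp only [mul_diagonal, transpose_apply]
    apply Finset.sum_congr rfl; intros; ring
  have hZsymmM : Zᵀ = Z := by
    ext i j
    rw [transpose_apply]
    exact hzs j i
  -- diagonal of Z
  have hdiag : ∀ i, Z i i = -(1/2) * ((S.hadamard S).mulVec lamBar i) := by
    intro i
    rw [hZdef, mul_apply]
    simp only [mul_diagonal, transpose_apply]
    simp only [mulVec, dotProduct, hadamard_apply]
    rw [Finset.mul_sum]
    apply Finset.sum_congr rfl; intro k _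
    simp only [hdz]
    ring
  -- Frobenius norm of Z
  have hZZ : Z * Zᵀ = S * diagonal (fun k => dz k * dz k) * Sᵀ := by
    rw [hZsymmM]
    rw [hZdef]
    have h9 : S * diagonal dz * Sᵀ * (S * diagonal dz * Sᵀ)
        = S * (diagonal dz * ((Sᵀ * S) * (diagonal dz * Sᵀ))) := by
      simp only [Matrix.mul_assoc]
    rw [h9, hSS, Matrix.one_mul, ← Matrix.mul_assoc (diagonal dz) (diagonal dz) Sᵀ,
      diagonal_mul_diagonal, ← Matrix.mul_assoc]
  have hF : ∑ i, ∑ j, (Z i j)^2 = ∑ k, dz k ^ 2 := by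
    have h1 : ∑ i, ∑ j, (Z i j)^2 = (Z * Zᵀ).trace := by
      rw [Matrix.trace]
      apply Finset.sum_congr rfl; intro i _
      rw [Matrix.diag, mul_apply]
      apply Finset.sum_congr rfl; intro j _
      rw [transpose_apply, sq]
    rw [h1, hZZ, Matrix.trace_mul_comm, ← Matrix.mul_assoc, hSS, Matrix.one_mul,
      Matrix.trace_diagonal]
    apply Finset.sum_congr rfl; intro k _
    rw [sq]
  have hT : ∑ i, Z i i = ∑ k, dz k := by
    have h1 : ∑ i, Z i i = Z.trace := rfl
    rw [h1, hZdef, Matrix.trace_mul_comm, ← Matrix.mul_assoc, hSS, Matrix.one_mul,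
      Matrix.trace_diagonal]
  -- row sums of Z vanish
  have hSt1 : Sᵀ *ᵥ (fun _ => (1:ℝ)) = fun k => if k = Fin.last n then -s else 0 := by
    simp only [S, transpose_mul, hQsymm]
    rw [← Matrix.mulVec_mulVec, hQ1]
    funext k
    simp only [mulVec, dotProduct, transpose_apply, Ub, of_apply, mul_ite, mul_zero]
    rw [Finset.sum_ite_eq' Finset.univ (Fin.last n)]
    induction k using Fin.lastCases with
    | last => simp
    | cast k' => simp [(Fin.castSucc_lt_last k').ne]
  have hrow : ∀ i, ∑ j, Z i j = 0 := by
    have hZ1 : Z *ᵥ (fun _ => (1:ℝ)) = 0 := by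
      rw [hZdef, ← Matrix.mulVec_mulVec, ← Matrix.mulVec_mulVec, hSt1]
      have h0 : (diagonal dz *ᵥ fun k => if k = Fin.last n then -s else 0) = 0 := by
        funext k
        rw [mulVec_diagonal]
        induction k using Fin.lastCases with
        | last => simp [hdz, lamBar]
        | cast k' => simp [(Fin.castSucc_lt_last k').ne]
      rw [h0, mulVec_zero]
    intro i
    have h2 := congrFun hZ1 i
    simpa [mulVec, dotProduct] using h2
  have hcol : ∀ j, ∑ i, Z i j = 0 := by
    intro j
    rw [Finset.sum_congr rfl fun i _ => hzs i j]
    exact hrow j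
  -- final assembly
  have step1 : ∑ i, ∑ j, (D i j - Dcmds i j) ^ 2
      = ∑ i, ∑ j, (Z i i + Z j j - 2 * Z i j) ^ 2 := by
    apply Finset.sum_congr rfl; intro i _
    apply Finset.sum_congr rfl; intro j _
    rw [key i j]
  rw [step1, sum_sq_expand Z hrow hcol]
  have e1 : ∑ i, (Z i i)^2 = (1/4) * ∑ i, ((S.hadamard S).mulVec lamBar i) ^ 2 := by
    rw [Finset.mul_sum]
    apply Finset.sum_congr rfl; intro i _
    rw [hdiag i]; ring
  have e2 : ∑ k, dz k ^ 2 = (1/4) * ∑ k, lamBar k ^ 2 := by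
    rw [Finset.mul_sum]
    apply Finset.sum_congr rfl; intro k _
    simp only [hdz]; ring
  have e3 : ∑ k, dz k = -(1/2) * ∑ k, lamBar k := by
    rw [Finset.mul_sum]
    apply Finset.sum_congr rfl; intro k _
    simp only [hdz]; ring
  rw [e1, hF, e2, hT, e3]
  simp only [C1, C2]
  push_cast
  ring
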